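/- arXiv:math/0609659 — 2 statements merged into one kernel-verified Lean document; each statement's English description precedes it below -/
import Mathlib

section
/- Let K be an infinite field and n, r ≥ 1. Let i, j, l ∈ I(ℤ,r). For x ∈ I(ℤ,r) let Σ̂_x denote the stabilizer of x in Σ̂_r (a finite group), and write Σ̂_{x,y} = Σ̂_x ∩ Σ̂_y, Σ̂_{x,y,z} = Σ̂_x ∩ Σ̂_y ∩ Σ̂_z. Let D ⊆ Σ̂_j be a set containing exactly one element of each double coset Σ̂_{j,l}\Σ̂_j/Σ̂_{i,j}. Then ξ_{i,j} ∘ ξ_{j,l} = Σ_{δ∈D} [Σ̂_{i,l·δ} : Σ̂_{i,j,l·δ}] · ξ_{i,l·δ}, where l·δ denotes the right action of δ on l, [Σ̂_{i,l·δ} : Σ̂_{i,j,l·δ}] is the (finite) index of the subgroup Σ̂_i ∩ Σ̂_j ∩ Σ̂_{l·δ} in Σ̂_i ∩ Σ̂_{l·δ}, cast into K, and the sum is over the finite set D. -/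
noncomputable section

namespace AffineSchur

variable (K : Type*) [Field K] (n r : ℕ)

/-- The right action of the pair `(σ,ε) ∈ Σ̂_r = Σ_r ⋉ ℤ^r` on `I(ℤ,r)`:
`i·(σ,ε) = i∘σ + n·ε`. -/
def act (σ : Equiv.Perm (Fin r)) (ε : Fin r → ℤ) (i : Fin r → ℤ) : Fin r → ℤ :=
  fun k => i (σ k) + n * ε k

/-- The tensor space `Ẽ^{⊗r}`: the free `K`-module with basis `(v_i)_{i ∈ I(ℤ,r)}`. -/
abbrev TensorSpace := (Fin r → ℤ) →₀ K

/-- The right-translation operator `T_{σ,ε} : v_i ↦ v_{i·(σ,ε)}`. -/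
def transOp (σ : Equiv.Perm (Fin r)) (ε : Fin r → ℤ) :
    Module.End K (TensorSpace K r) :=
  Finsupp.lmapDomain K K (act n r σ ε)

/-- The finite set `{k : (k,l) lies in the Σ̂_r-orbit of (i,j)}`. -/
def xiSupport (i j l : Fin r → ℤ) : Finset (Fin r → ℤ) := by
  classical
  exact (Finset.univ.filter fun σ : Equiv.Perm (Fin r) =>
      ∀ k, (n : ℤ) ∣ (l k - j (σ k))).image
    fun σ => fun k => i (σ k) + (l k - j (σ k))

/-- The operator `ξ_{i,j} ∈ End_K(Ẽ^{⊗r})` given by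
`ξ_{i,j}(v_l) = Σ_{k : (k,l) in the Σ̂_r-orbit of (i,j)} v_k`. -/
def xi (i j : Fin r → ℤ) : Module.End K (TensorSpace K r) :=
  Finsupp.lsum K fun l => LinearMap.toSpanSingleton K _
    (∑ k ∈ xiSupport n r i j l, Finsupp.single k (1 : K))

/-- The centralizer algebra `End_{KΣ̂_r}(Ẽ^{⊗r})` of all the translation operators
`T_{σ,ε}` inside `End_K(Ẽ^{⊗r})` — the affine Schur algebra `S̃(n,r)`. -/
def affineSchur : Subalgebra K (Module.End K (TensorSpace K r)) :=
  Subalgebra.centralizer K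
    (Set.range fun p : Equiv.Perm (Fin r) × (Fin r → ℤ) => transOp K n r p.1 p.2)


/-- The extended affine Weyl group Σ̂_r = Σ_r ⋉ ℤ^r, realized (faithfully, via its right
action i ↦ i∘σ + n·ε on I(ℤ,r)) as a subgroup of the group of permutations of I(ℤ,r). -/
def SigmaHat : Subgroup (Equiv.Perm (Fin r → ℤ)) where
  carrier := {w | ∃ (σ : Equiv.Perm (Fin r)) (ε : Fin r → ℤ), ∀ x, w x = act n r σ ε x}
  one_mem' := ⟨1, 0, fun x => by funext k; simp [act]⟩
  mul_mem' := by
    rintro w w' ⟨σ, ε, hw⟩ ⟨σ', ε', hw'⟩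
    refine ⟨σ' * σ, fun k => ε' (σ k) + ε k, fun x => funext fun k => ?_⟩
    rw [Equiv.Perm.mul_apply, hw (w' x)]
    simp only [act, hw' x, Equiv.Perm.mul_apply]
    ring
  inv_mem' := by
    rintro w ⟨σ, ε, hw⟩
    refine ⟨σ⁻¹, fun k => -ε (σ⁻¹ k), fun x => ?_⟩
    have key : w (act n r σ⁻¹ (fun k => -ε (σ⁻¹ k)) x) = x := by
      rw [hw]
      funext k
      simp only [act, Equiv.Perm.inv_def, Equiv.symm_apply_apply]
      ring
    calc w⁻¹ x = w⁻¹ (w (act n r σ⁻¹ (fun k => -ε (σ⁻¹ k)) x)) := by rw [key]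
    _ = act n r σ⁻¹ (fun k => -ε (σ⁻¹ k)) x := by rw [Equiv.Perm.inv_def, Equiv.symm_apply_apply]

/-- The stabilizer Σ̂_x of a tuple x ∈ I(ℤ,r) inside the extended affine Weyl group
Σ̂_r (a finite subgroup). -/
def hatStab (x : Fin r → ℤ) : Subgroup (Equiv.Perm (Fin r → ℤ)) :=
  SigmaHat n r ⊓ MulAction.stabilizer (Equiv.Perm (Fin r → ℤ)) x


/-! ### Auxiliary material for the proof -/

section Aux

/-- The permutation of `I(ℤ,r)` given by `(σ,ε)`. -/
def toHatPerm {r : ℕ} (n : ℕ) (σ : Equiv.Perm (Fin r)) (ε : Fin r → ℤ) :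
    Equiv.Perm (Fin r → ℤ) where
  toFun := act n r σ ε
  invFun := act n r σ⁻¹ fun t => -ε (σ⁻¹ t)
  left_inv x := by funext t; simp only [act, Equiv.Perm.inv_def, Equiv.apply_symm_apply]; ring
  right_inv x := by funext t; simp only [act, Equiv.Perm.inv_def, Equiv.symm_apply_apply]; ring

lemma toHatPerm_mem {n r : ℕ} (σ : Equiv.Perm (Fin r)) (ε : Fin r → ℤ) :
    toHatPerm n σ ε ∈ SigmaHat n r := ⟨σ, ε, fun _ => rfl⟩

lemma mem_xiSupport_iff {n r : ℕ} {i j l k : Fin r → ℤ} :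
    k ∈ xiSupport n r i j l ↔ ∃ w ∈ SigmaHat n r, w i = k ∧ w j = l := by
  classical
  unfold xiSupport
  simp only [Finset.mem_image, Finset.mem_filter, Finset.mem_univ, true_and]
  constructor
  · rintro ⟨σ, hσ, rfl⟩
    refine ⟨toHatPerm n σ (fun t => (l t - j (σ t)) / n), toHatPerm_mem σ _, ?_, ?_⟩
    · funext t
      show i (σ t) + n * ((l t - j (σ t)) / n) = _
      rw [Int.mul_ediv_cancel' (hσ t)]
    · funext t
      show j (σ t) + n * ((l t - j (σ t)) / n) = l t
      rw [Int.mul_ediv_cancel' (hσ t)]; ring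
  · rintro ⟨w, ⟨σ, ε, hw⟩, rfl, rfl⟩
    refine ⟨σ, fun t => ⟨ε t, ?_⟩, ?_⟩
    · rw [hw j]; show act n r σ ε j t - j (σ t) = n * ε t; simp [act]
    · funext t
      rw [hw i, hw j]
      show i (σ t) + (act n r σ ε j t - j (σ t)) = act n r σ ε i t
      simp [act]

lemma mem_hatStab_iff {n r : ℕ} {x : Fin r → ℤ} {w : Equiv.Perm (Fin r → ℤ)} :
    w ∈ hatStab n r x ↔ w ∈ SigmaHat n r ∧ w x = x := by
  rw [hatStab, Subgroup.mem_inf, MulAction.mem_stabilizer_iff, Equiv.Perm.smul_def]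

/-- The data recording that `k'` contributes to the `(k,m)` coefficient of the product
`ξ_{i,j}∘ξ_{j,l}` through the double-coset representative `δ`. -/
def Pprop (n r : ℕ) (i j l k m : Fin r → ℤ) (D : Finset (Equiv.Perm (Fin r → ℤ)))
    (k' : Fin r → ℤ) (δ : Equiv.Perm (Fin r → ℤ)) : Prop :=
  δ ∈ D ∧ ∃ u ∈ SigmaHat n r, u i = k ∧ u j = k' ∧
    ∃ w ∈ SigmaHat n r, w j = k' ∧ w l = m ∧
    ∃ a ∈ hatStab n r i ⊓ hatStab n r j, ∃ b ∈ hatStab n r j ⊓ hatStab n r l,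
      u⁻¹ * w = a * δ * b

lemma Pprop_unique {n r : ℕ} {i j l k m : Fin r → ℤ} {D : Finset (Equiv.Perm (Fin r → ℤ))}
    (hDrep : ∀ g ∈ hatStab n r j,
      ∃! δ, δ ∈ D ∧
        ∃ u ∈ hatStab n r i ⊓ hatStab n r j,
          ∃ v ∈ hatStab n r j ⊓ hatStab n r l, g = u * δ * v)
    {k' : Fin r → ℤ} {δ δ' : Equiv.Perm (Fin r → ℤ)}
    (h1 : Pprop n r i j l k m D k' δ) (h2 : Pprop n r i j l k m D k' δ') : δ = δ' := by
  obtain ⟨hδD, u, hu, hui, huj, w, hw, hwj, hwl, a, ha, b, hb, hab⟩ := h1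
  obtain ⟨hδ'D, u', hu', hui', huj', w', hw', hwj', hwl', a', ha', b', hb', hab'⟩ := h2
  have hs : u⁻¹ * u' ∈ hatStab n r i ⊓ hatStab n r j := by
    refine Subgroup.mem_inf.mpr ⟨mem_hatStab_iff.mpr ⟨mul_mem (inv_mem hu) hu', ?_⟩,
      mem_hatStab_iff.mpr ⟨mul_mem (inv_mem hu) hu', ?_⟩⟩
    · show u⁻¹ (u' i) = i
      rw [hui', ← hui, Equiv.Perm.inv_def, Equiv.symm_apply_apply]
    · show u⁻¹ (u' j) = j
      rw [huj', ← huj, Equiv.Perm.inv_def, Equiv.symm_apply_apply]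
  have ht : w⁻¹ * w' ∈ hatStab n r j ⊓ hatStab n r l := by
    refine Subgroup.mem_inf.mpr ⟨mem_hatStab_iff.mpr ⟨mul_mem (inv_mem hw) hw', ?_⟩,
      mem_hatStab_iff.mpr ⟨mul_mem (inv_mem hw) hw', ?_⟩⟩
    · show w⁻¹ (w' j) = j
      rw [hwj', ← hwj, Equiv.Perm.inv_def, Equiv.symm_apply_apply]
    · show w⁻¹ (w' l) = l
      rw [hwl', ← hwl, Equiv.Perm.inv_def, Equiv.symm_apply_apply]
  have hg' : u'⁻¹ * w' ∈ hatStab n r j := by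
    refine mem_hatStab_iff.mpr ⟨mul_mem (inv_mem hu') hw', ?_⟩
    show u'⁻¹ (w' j) = j
    rw [hwj', ← huj', Equiv.Perm.inv_def, Equiv.symm_apply_apply]
  obtain ⟨δ₀, -, huniq⟩ := hDrep _ hg'
  have e1 : δ = δ₀ := by
    refine huniq δ ⟨hδD, (u⁻¹ * u')⁻¹ * a, mul_mem (inv_mem hs) ha,
      b * (w⁻¹ * w'), mul_mem hb ht, ?_⟩
    have h9 : (u⁻¹ * u')⁻¹ * a * δ * (b * (w⁻¹ * w'))
        = u'⁻¹ * u * (a * δ * b) * (w⁻¹ * w') := by group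
    rw [h9, ← hab]
    group
  have e2 : δ' = δ₀ := huniq δ' ⟨hδ'D, a', ha', b', hb', hab'⟩
  rw [e1, e2]

open Classical in
/-- Assigns to `k'` the double-coset representative through which it contributes. -/
noncomputable def phi (n r : ℕ) (i j l k m : Fin r → ℤ)
    (D : Finset (Equiv.Perm (Fin r → ℤ))) (k' : Fin r → ℤ) : Equiv.Perm (Fin r → ℤ) :=
  if h : ∃ δ, Pprop n r i j l k m D k' δ then h.choose else 1

lemma phi_spec {n r : ℕ} {i j l k m : Fin r → ℤ} {D : Finset (Equiv.Perm (Fin r → ℤ))}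
    {k' : Fin r → ℤ} (h : ∃ δ, Pprop n r i j l k m D k' δ) :
    Pprop n r i j l k m D k' (phi n r i j l k m D k') := by
  rw [phi, dif_pos h]
  exact h.choose_spec

lemma Pprop_exists {n r : ℕ} {i j l k m : Fin r → ℤ} {D : Finset (Equiv.Perm (Fin r → ℤ))}
    (hDrep : ∀ g ∈ hatStab n r j,
      ∃! δ, δ ∈ D ∧
        ∃ u ∈ hatStab n r i ⊓ hatStab n r j,
          ∃ v ∈ hatStab n r j ⊓ hatStab n r l, g = u * δ * v)
    {k' : Fin r → ℤ} (h1 : k' ∈ xiSupport n r j l m) (h2 : k ∈ xiSupport n r i j k') :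
    ∃ δ, Pprop n r i j l k m D k' δ := by
  obtain ⟨w, hw, hwj, hwl⟩ := mem_xiSupport_iff.mp h1
  obtain ⟨u, hu, hui, huj⟩ := mem_xiSupport_iff.mp h2
  have hg : u⁻¹ * w ∈ hatStab n r j := by
    refine mem_hatStab_iff.mpr ⟨mul_mem (inv_mem hu) hw, ?_⟩
    show u⁻¹ (w j) = j
    rw [hwj, ← huj, Equiv.Perm.inv_def, Equiv.symm_apply_apply]
  obtain ⟨δ, ⟨hδD, a, ha, b, hb, heq⟩, -⟩ := hDrep _ hg
  exact ⟨δ, hδD, u, hu, hui, huj, w, hw, hwj, hwl, a, ha, b, hb, heq⟩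

lemma Pprop_orbit {n r : ℕ} {i j l k m : Fin r → ℤ} {D : Finset (Equiv.Perm (Fin r → ℤ))}
    {k' : Fin r → ℤ} {δ : Equiv.Perm (Fin r → ℤ)}
    (h : Pprop n r i j l k m D k' δ) : k ∈ xiSupport n r i (δ l) m := by
  obtain ⟨hδD, u, hu, hui, huj, w, hw, hwj, hwl, a, ha, b, hb, hab⟩ := h
  obtain ⟨hai, haj⟩ := Subgroup.mem_inf.mp ha
  obtain ⟨haG, hai'⟩ := mem_hatStab_iff.mp hai
  have haj' := (mem_hatStab_iff.mp haj).2
  have hbl' := (mem_hatStab_iff.mp (Subgroup.mem_inf.mp hb).2).2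
  refine mem_xiSupport_iff.mpr ⟨u * a, mul_mem hu haG, ?_, ?_⟩
  · show u (a i) = k
    rw [hai', hui]
  · show u (a (δ l)) = m
    have hw2 : w = u * (a * δ * b) := by rw [← hab]; group
    rw [← hwl, hw2]
    show u (a (δ l)) = u (a (δ (b l)))
    rw [hbl']

lemma key_count {n r : ℕ} {i j l : Fin r → ℤ} {D : Finset (Equiv.Perm (Fin r → ℤ))}
    (hD : ∀ δ ∈ D, δ ∈ hatStab n r j)
    (hDrep : ∀ g ∈ hatStab n r j,
      ∃! δ, δ ∈ D ∧
        ∃ u ∈ hatStab n r i ⊓ hatStab n r j,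
          ∃ v ∈ hatStab n r j ⊓ hatStab n r l, g = u * δ * v)
    (k m : Fin r → ℤ) :
    ((xiSupport n r j l m).filter fun k' => k ∈ xiSupport n r i j k').card
      = ∑ δ ∈ D, (MulAction.stabilizer (Equiv.Perm (Fin r → ℤ)) j).relIndex
          (hatStab n r i ⊓ hatStab n r (δ l)) *
          (if k ∈ xiSupport n r i (δ l) m then 1 else 0) := by
  classical
  have hmem : ∀ x ∈ (xiSupport n r j l m).filter (fun k' => k ∈ xiSupport n r i j k'),
      phi n r i j l k m D x ∈ D := by
    intro x hx
    rw [Finset.mem_filter] at hx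
    exact (phi_spec (Pprop_exists hDrep hx.1 hx.2)).1
  rw [Finset.card_eq_sum_card_fiberwise hmem]
  refine Finset.sum_congr rfl fun δ hδ => ?_
  by_cases hk : k ∈ xiSupport n r i (δ l) m
  · rw [if_pos hk, mul_one]
    obtain ⟨h₀, hh₀, h₀i, h₀l⟩ := mem_xiSupport_iff.mp hk
    have hδj := (mem_hatStab_iff.mp (hD δ hδ)).2
    have hδG := (mem_hatStab_iff.mp (hD δ hδ)).1
    set Kg := hatStab n r i ⊓ hatStab n r (δ l) with hKgdef
    set F := (xiSupport n r j l m).filter (fun k' => k ∈ xiSupport n r i j k') with hFdef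
    have hf : ∀ p : ↥Kg, h₀ ((p : Equiv.Perm (Fin r → ℤ)) j) ∈
        F.filter (fun a => phi n r i j l k m D a = δ) := by
      intro p
      obtain ⟨hpi, hpl⟩ := Subgroup.mem_inf.mp p.2
      obtain ⟨hpG, hpi'⟩ := mem_hatStab_iff.mp hpi
      have hpl' := (mem_hatStab_iff.mp hpl).2
      have hP : Pprop n r i j l k m D (h₀ ((p : Equiv.Perm (Fin r → ℤ)) j)) δ := by
        refine ⟨hδ, h₀ * (p : Equiv.Perm (Fin r → ℤ)), mul_mem hh₀ hpG, ?_, rfl,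
          h₀ * (p : Equiv.Perm (Fin r → ℤ)) * δ, mul_mem (mul_mem hh₀ hpG) hδG, ?_, ?_,
          1, one_mem _, 1, one_mem _, by group⟩
        · show h₀ ((p : Equiv.Perm (Fin r → ℤ)) i) = k
          rw [hpi', h₀i]
        · show h₀ ((p : Equiv.Perm (Fin r → ℤ)) (δ j)) = h₀ ((p : Equiv.Perm (Fin r → ℤ)) j)
          rw [hδj]
        · show h₀ ((p : Equiv.Perm (Fin r → ℤ)) (δ l)) = m
          rw [hpl', h₀l]
      have hmemF : h₀ ((p : Equiv.Perm (Fin r → ℤ)) j) ∈ F := by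
        rw [hFdef, Finset.mem_filter]
        obtain ⟨-, u, hu, hui, huj, w, hw, hwj, hwl, -⟩ := hP
        exact ⟨mem_xiSupport_iff.mpr ⟨w, hw, hwj, hwl⟩,
          mem_xiSupport_iff.mpr ⟨u, hu, hui, huj⟩⟩
      refine Finset.mem_filter.mpr ⟨hmemF, ?_⟩
      exact Pprop_unique hDrep (phi_spec ⟨δ, hP⟩) hP
    set H' := (MulAction.stabilizer (Equiv.Perm (Fin r → ℤ)) j).subgroupOf Kg with hH'def
    let f : ↥Kg → {x // x ∈ F.filter (fun a => phi n r i j l k m D a = δ)} :=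
      fun p => ⟨h₀ ((p : Equiv.Perm (Fin r → ℤ)) j), hf p⟩
    have hresp : ∀ p q : ↥Kg, (QuotientGroup.leftRel H') p q → f p = f q := by
      intro p q hpq
      rw [QuotientGroup.leftRel_apply, Subgroup.mem_subgroupOf] at hpq
      have h2 : (p : Equiv.Perm (Fin r → ℤ))⁻¹ ((q : Equiv.Perm (Fin r → ℤ)) j) = j := by
        have := MulAction.mem_stabilizer_iff.mp hpq
        simpa [Equiv.Perm.smul_def, Equiv.Perm.mul_apply] using this
      have h3 : (q : Equiv.Perm (Fin r → ℤ)) j = (p : Equiv.Perm (Fin r → ℤ)) j := by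
        conv_rhs => rw [← h2]
        rw [Equiv.Perm.inv_def, Equiv.apply_symm_apply]
      exact Subtype.ext (by simp only [f]; rw [h3])
    let e : (↥Kg ⧸ H') → {x // x ∈ F.filter (fun a => phi n r i j l k m D a = δ)} :=
      fun q => Quotient.liftOn' q f hresp
    have hbij : Function.Bijective e := by
      constructor
      · intro q1 q2
        refine Quotient.inductionOn₂' q1 q2 fun p q hpq => ?_
        have h1 : h₀ ((p : Equiv.Perm (Fin r → ℤ)) j) = h₀ ((q : Equiv.Perm (Fin r → ℤ)) j) :=
          congrArg Subtype.val hpq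
        have h2 : (p : Equiv.Perm (Fin r → ℤ)) j = (q : Equiv.Perm (Fin r → ℤ)) j :=
          h₀.injective h1
        apply Quotient.sound'
        rw [QuotientGroup.leftRel_apply, Subgroup.mem_subgroupOf]
        refine MulAction.mem_stabilizer_iff.mpr ?_
        show ((p⁻¹ * q : ↥Kg) : Equiv.Perm (Fin r → ℤ)) • j = j
        simp only [Subgroup.coe_mul, InvMemClass.coe_inv, Equiv.Perm.smul_def,
          Equiv.Perm.mul_apply, ← h2, Equiv.Perm.inv_def, Equiv.symm_apply_apply]
      · rintro ⟨k', hk'⟩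
        rw [Finset.mem_filter] at hk'
        obtain ⟨hk'F, hφ⟩ := hk'
        have hk'F' := hk'F
        rw [hFdef, Finset.mem_filter] at hk'F'
        have hP : Pprop n r i j l k m D k' δ :=
          hφ ▸ phi_spec (Pprop_exists hDrep hk'F'.1 hk'F'.2)
        obtain ⟨-, u, hu, hui, huj, w, hw, hwj, hwl, a, ha, b, hb, hab⟩ := hP
        obtain ⟨hai, haj⟩ := Subgroup.mem_inf.mp ha
        obtain ⟨haG, hai'⟩ := mem_hatStab_iff.mp hai
        have haj' := (mem_hatStab_iff.mp haj).2
        have hbl' := (mem_hatStab_iff.mp (Subgroup.mem_inf.mp hb).2).2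
        have hual : u (a (δ l)) = m := by
          have hw2 : w = u * (a * δ * b) := by rw [← hab]; group
          rw [← hwl, hw2]
          show u (a (δ l)) = u (a (δ (b l)))
          rw [hbl']
        have hpG : h₀⁻¹ * u * a ∈ SigmaHat n r :=
          mul_mem (mul_mem (inv_mem hh₀) hu) haG
        have hpi : (h₀⁻¹ * u * a) i = i := by
          show h₀⁻¹ (u (a i)) = i
          rw [hai', hui, ← h₀i, Equiv.Perm.inv_def, Equiv.symm_apply_apply]
        have hpl : (h₀⁻¹ * u * a) (δ l) = δ l := by
          show h₀⁻¹ (u (a (δ l))) = δ l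
          rw [hual, ← h₀l, Equiv.Perm.inv_def, Equiv.symm_apply_apply]
        refine ⟨QuotientGroup.mk ⟨h₀⁻¹ * u * a, Subgroup.mem_inf.mpr
          ⟨mem_hatStab_iff.mpr ⟨hpG, hpi⟩, mem_hatStab_iff.mpr ⟨hpG, hpl⟩⟩⟩, ?_⟩
        apply Subtype.ext
        show h₀ ((h₀⁻¹ * u * a) j) = k'
        show h₀ (h₀⁻¹ (u (a j))) = k'
        rw [haj', huj, Equiv.Perm.inv_def, Equiv.apply_symm_apply]
    calc (F.filter (fun a => phi n r i j l k m D a = δ)).card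
        = Nat.card {x // x ∈ F.filter (fun a => phi n r i j l k m D a = δ)} :=
          (Nat.card_eq_finsetCard _).symm
      _ = Nat.card (↥Kg ⧸ H') := (Nat.card_eq_of_bijective e hbij).symm
      _ = (MulAction.stabilizer (Equiv.Perm (Fin r → ℤ)) j).relIndex Kg :=
          (Subgroup.index_eq_card H').symm
  · rw [if_neg hk, mul_zero, Finset.card_eq_zero, Finset.filter_eq_empty_iff]
    intro k' hk' hφ
    rw [Finset.mem_filter] at hk'
    exact hk (Pprop_orbit (hφ ▸ phi_spec (Pprop_exists hDrep hk'.1 hk'.2)))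

lemma xi_single {K : Type*} [Field K] {n r : ℕ} (i j m : Fin r → ℤ) (c : K) :
    xi K n r i j (Finsupp.single m c)
      = c • ∑ k ∈ xiSupport n r i j m, Finsupp.single k (1 : K) := by
  rw [xi, Finsupp.lsum_single, LinearMap.toSpanSingleton_apply]

end Aux

/-- the multiplication rule
ξ_{i,j} ∘ ξ_{j,l} = Σ_{δ∈D} [Σ̂_{i,l·δ} : Σ̂_{i,j,l·δ}] · ξ_{i,l·δ},
where D ⊆ Σ̂_j is a set containing exactly one element of each double coset
Σ̂_{j,l}\Σ̂_j/Σ̂_{i,j}, and the finite index [Σ̂_{i,l·δ} : Σ̂_{i,j,l·δ}] of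
Σ̂_i ∩ Σ̂_j ∩ Σ̂_{l·δ} in Σ̂_i ∩ Σ̂_{l·δ} is cast into K.  (Note that the realization
w ↦ (x ↦ x·w) of Σ̂_r inside the permutations of I(ℤ,r) is an anti-isomorphism, so the
double coset Σ̂_{j,l}·δ·Σ̂_{i,j} of the paper reads Σ̂_{i,j}·δ·Σ̂_{j,l} here, and the
right action l·δ becomes the application δ(l).) -/
theorem xi_mul_xi_double_cosets (K : Type*) [Field K] [Infinite K]
    (n r : ℕ) (hn : 1 ≤ n) (hr : 1 ≤ r)
    (i j l : Fin r → ℤ)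
    (D : Finset (Equiv.Perm (Fin r → ℤ)))
    (hD : ∀ δ ∈ D, δ ∈ hatStab n r j)
    (hDrep : ∀ g ∈ hatStab n r j,
      ∃! δ, δ ∈ D ∧
        ∃ u ∈ hatStab n r i ⊓ hatStab n r j,
          ∃ v ∈ hatStab n r j ⊓ hatStab n r l, g = u * δ * v) :
    xi K n r i j ∘ₗ xi K n r j l =
      ∑ δ ∈ D,
        (((MulAction.stabilizer (Equiv.Perm (Fin r → ℤ)) j).relIndex
            (hatStab n r i ⊓ hatStab n r (δ l)) : ℕ) : K) • xi K n r i (δ l) := by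
  classical
  apply Finsupp.lhom_ext
  intro m c
  have L : (xi K n r i j ∘ₗ xi K n r j l) (Finsupp.single m c)
      = c • ∑ k' ∈ xiSupport n r j l m, ∑ k'' ∈ xiSupport n r i j k',
          Finsupp.single k'' (1 : K) := by
    rw [LinearMap.comp_apply, xi_single, map_smul, map_sum]
    congr 1
    refine Finset.sum_congr rfl fun k' _ => ?_
    rw [xi_single, one_smul]
  have R : (∑ δ ∈ D,
        (((MulAction.stabilizer (Equiv.Perm (Fin r → ℤ)) j).relIndex
            (hatStab n r i ⊓ hatStab n r (δ l)) : ℕ) : K) • xi K n r i (δ l))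
        (Finsupp.single m c)
      = ∑ δ ∈ D, (((MulAction.stabilizer (Equiv.Perm (Fin r → ℤ)) j).relIndex
            (hatStab n r i ⊓ hatStab n r (δ l)) : ℕ) : K) •
          (c • ∑ k ∈ xiSupport n r i (δ l) m, Finsupp.single k (1 : K)) := by
    rw [LinearMap.sum_apply]
    refine Finset.sum_congr rfl fun δ _ => ?_
    rw [LinearMap.smul_apply, xi_single]
  rw [L, R]
  ext k
  simp only [Finsupp.smul_apply, Finsupp.finset_sum_apply, Finsupp.single_apply,
    Finset.sum_ite_eq', smul_eq_mul]
  rw [Finset.sum_boole]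
  rw [key_count hD hDrep k m]
  push_cast
  rw [Finset.mul_sum]
  exact Finset.sum_congr rfl fun δ _ => by ring


end AffineSchur
end
end

section
/- Let K be an infinite field, n, r ≥ 1, and a ∈ Kˣ. There exists a surjective unital K-algebra homomorphism Ψ_a : End_{KΣ̂_r}(Ẽ^{⊗r}) → End_{KΣ_r}(E^{⊗r}) such that for all i, j ∈ I(n,r) and all ε ∈ (Fin r → ℤ): Ψ_a(ξ_{i, j+nε}) = a^{ht(ε)} · [Σ_{i,j} : Σ_{i,j,ε}] · ξ^fin_{i,j}, where ht(ε) = Σ_k ε_k ∈ ℤ, a^{ht(ε)} is the integer power of the unit a, Σ_{i,j} = {σ ∈ Σ_r : i∘σ = i and j∘σ = j}, Σ_{i,j,ε} = {σ ∈ Σ_{i,j} : ε∘σ = ε}, and the (finite) subgroup index [Σ_{i,j} : Σ_{i,j,ε}] is cast into K. In particular Ψ_a(ξ_{i,j}) = ξ^fin_{i,j} for i, j ∈ I(n,r), so Ψ_a restricts to the identity on the naturally embedded Schur algebra. -/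
noncomputable section

namespace AffineSchur

variable (K : Type*) [Field K] (n r : ℕ)

/-- `I(n,r)`: the set of r-tuples with entries in `{1,…,n}`, as a subtype of `I(ℤ,r)`. -/
def FinIdx (n r : ℕ) := {i : Fin r → ℤ // ∀ k, 1 ≤ i k ∧ i k ≤ (n : ℤ)}

/-- The tensor space `E^{⊗r}`: the free `K`-module with basis indexed by `I(n,r)`. -/
abbrev FinTensorSpace := (FinIdx n r) →₀ K

/-- The place-permutation operator `v_i ↦ v_{i∘σ}` on `E^{⊗r}`. -/
def permOpFin (σ : Equiv.Perm (Fin r)) : Module.End K (FinTensorSpace K n r) :=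
  Finsupp.lmapDomain K K
    (fun i : FinIdx n r => (⟨fun k => i.1 (σ k), fun k => i.2 (σ k)⟩ : FinIdx n r))

/-- The finite set `{k : (k,l) lies in the Σ_r-orbit of (i,j)}` inside `I(n,r)`. -/
def xiFinSupport (i j l : FinIdx n r) : Finset (FinIdx n r) := by
  classical
  exact (Finset.univ.filter fun σ : Equiv.Perm (Fin r) =>
      (fun k => j.1 (σ k)) = l.1).image
    fun σ => (⟨fun k => i.1 (σ k), fun k => i.2 (σ k)⟩ : FinIdx n r)

/-- The operator `ξ^fin_{i,j} ∈ End_K(E^{⊗r})` given by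
`ξ^fin_{i,j}(v_l) = Σ_{k : (k,l) in the Σ_r-orbit of (i,j)} v_k`. -/
def xiFin (i j : FinIdx n r) : Module.End K (FinTensorSpace K n r) :=
  Finsupp.lsum K fun l => LinearMap.toSpanSingleton K _
    (∑ k ∈ xiFinSupport n r i j l, Finsupp.single k (1 : K))

/-- The Schur algebra `S(n,r) = End_{KΣ_r}(E^{⊗r})`: the centralizer of the
place-permutation operators inside `End_K(E^{⊗r})`. -/
def schurAlgebra : Subalgebra K (Module.End K (FinTensorSpace K n r)) :=
  Subalgebra.centralizer K (Set.range fun σ : Equiv.Perm (Fin r) => permOpFin K n r σ)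

/-- The stabilizer of a tuple i : Fin r → ℤ under the place-permutation action,
as a subgroup of the symmetric group Σ_r. -/
def permStab (i : Fin r → ℤ) : Subgroup (Equiv.Perm (Fin r)) where
  carrier := {σ | ∀ k, i (σ k) = i k}
  one_mem' := fun k => by simp
  mul_mem' := by
    intro a b ha hb k
    simp only [Equiv.Perm.mul_apply]
    rw [ha (b k), hb k]
  inv_mem' := by
    intro a ha k
    have h := ha (a⁻¹ k)
    rw [show a (a⁻¹ k) = k from a.apply_symm_apply k] at h
    exact h.symm

section Construction

open Finsupp

/-- height of ε -/
def ht {r : ℕ} (ε : Fin r → ℤ) : ℤ := ∑ k, ε k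

/-- integer quotient part -/
def deltaF (n : ℕ) {r : ℕ} (i : Fin r → ℤ) : Fin r → ℤ := fun k => (i k - 1) / n

/-- reduction mod n into I(n,r) -/
def redbar {n : ℕ} (hn : 0 < n) {r : ℕ} (i : Fin r → ℤ) : FinIdx n r :=
  ⟨fun k => (i k - 1) % n + 1, fun k => by
    show 1 ≤ (i k - 1) % n + 1 ∧ (i k - 1) % n + 1 ≤ (n : ℤ)
    have h1 := Int.emod_nonneg (i k - 1) (by exact_mod_cast hn.ne' : (n:ℤ) ≠ 0)
    have h2 := Int.emod_lt_of_pos (i k - 1) (by exact_mod_cast hn : (0:ℤ) < n)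
    omega⟩

variable {n r : ℕ}

lemma redbar_add_delta (hn : 0 < n) (i : Fin r → ℤ) (k : Fin r) :
    (redbar hn i).1 k + n * deltaF n i k = i k := by
  have h := Int.emod_add_mul_ediv (i k - 1) (n : ℤ)
  simp only [redbar, deltaF]
  linarith

lemma redbar_shift (hn : 0 < n) (i ε : Fin r → ℤ) :
    redbar hn (fun k => i k + n * ε k) = redbar hn i := by
  apply Subtype.ext
  funext k
  show (i k + n * ε k - 1) % n + 1 = (i k - 1) % n + 1
  rw [show i k + n * ε k - 1 = i k - 1 + ε k * (n:ℤ) by ring, Int.add_mul_emod_self_right]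

lemma delta_shift (hn : 0 < n) (i ε : Fin r → ℤ) :
    deltaF n (fun k => i k + n * ε k) = fun k => deltaF n i k + ε k := by
  funext k
  show (i k + n * ε k - 1) / n = (i k - 1) / n + ε k
  rw [show i k + n * ε k - 1 = i k - 1 + ε k * (n:ℤ) by ring,
    Int.add_mul_ediv_right _ _ (by exact_mod_cast hn.ne' : (n:ℤ) ≠ 0)]

lemma redbar_val (hn : 0 < n) (i : FinIdx n r) : redbar hn i.1 = i := by
  apply Subtype.ext
  funext k
  show (i.1 k - 1) % n + 1 = i.1 k
  have h := i.2 k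
  rw [Int.emod_eq_of_lt (by omega) (by omega)]
  ring

lemma delta_val (n : ℕ) (i : FinIdx n r) : deltaF n i.1 = fun _ => 0 := by
  funext k
  have h := i.2 k
  exact Int.ediv_eq_zero_of_lt (by omega) (by omega)

lemma ht_comp (σ : Equiv.Perm (Fin r)) (ε : Fin r → ℤ) :
    ht (fun k => ε (σ k)) = ht ε := Equiv.sum_comp σ ε

lemma ht_add (δ ε : Fin r → ℤ) : ht (fun k => δ k + ε k) = ht δ + ht ε :=
  Finset.sum_add_distrib

variable (K : Type*) [Field K]

lemma transOp_single (σ : Equiv.Perm (Fin r)) (ε : Fin r → ℤ) (i : Fin r → ℤ) (c : K) :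
    transOp K n r σ ε (Finsupp.single i c) = Finsupp.single (act n r σ ε i) c := by
  simp [transOp, Finsupp.lmapDomain_apply, Finsupp.mapDomain_single]

lemma permOpFin_single (σ : Equiv.Perm (Fin r)) (i : FinIdx n r) (c : K) :
    permOpFin K n r σ (Finsupp.single i c)
      = Finsupp.single (⟨fun k => i.1 (σ k), fun k => i.2 (σ k)⟩ : FinIdx n r) c := by
  exact Finsupp.mapDomain_single

lemma permOpFin_one : permOpFin K n r 1 = LinearMap.id := by
  apply Finsupp.lhom_ext
  intro l c
  rw [permOpFin_single]
  simp
  rfl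

lemma transOp_one_zero : transOp K n r 1 0 = LinearMap.id := by
  apply Finsupp.lhom_ext
  intro l c
  rw [transOp_single]
  have : act n r 1 0 l = l := by
    funext k
    simp [act]
  rw [this]
  rfl

lemma transOp_comp (σ τ : Equiv.Perm (Fin r)) (ε δ : Fin r → ℤ) :
    transOp K n r σ ε ∘ₗ transOp K n r τ δ
      = transOp K n r (τ * σ) (fun k => δ (σ k) + ε k) := by
  apply Finsupp.lhom_ext
  intro i c
  simp only [LinearMap.comp_apply, transOp_single]
  congr 1
  funext k
  simp [act, Equiv.Perm.mul_apply]
  ring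

/-- the projection π : Ẽ^{⊗r} → E^{⊗r} -/
def proj (hn : 0 < n) (a : Kˣ) : TensorSpace K r →ₗ[K] FinTensorSpace K n r :=
  Finsupp.lsum K fun i => LinearMap.toSpanSingleton K _
    (Finsupp.single (redbar hn i) ((a ^ (-(ht (deltaF n i))) : Kˣ) : K))

lemma proj_single (hn : 0 < n) (a : Kˣ) (i : Fin r → ℤ) (c : K) :
    proj K hn a (Finsupp.single i c)
      = Finsupp.single (redbar hn i) (c * ((a ^ (-(ht (deltaF n i))) : Kˣ) : K)) := by
  rw [proj, Finsupp.lsum_single, LinearMap.toSpanSingleton_apply, Finsupp.smul_single,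
    smul_eq_mul]

/-- the inclusion ι : E^{⊗r} → Ẽ^{⊗r} -/
def incl : FinTensorSpace K n r →ₗ[K] TensorSpace K r :=
  Finsupp.lmapDomain K K Subtype.val

lemma incl_single (i : FinIdx n r) (c : K) :
    incl K (Finsupp.single i c) = Finsupp.single i.1 c := by
  exact Finsupp.mapDomain_single

lemma proj_comp_transOp (hn : 0 < n) (a : Kˣ) (σ : Equiv.Perm (Fin r)) (ε : Fin r → ℤ) :
    proj K hn a ∘ₗ transOp K n r σ ε
      = ((a ^ (-(ht ε)) : Kˣ) : K) • (permOpFin K n r σ ∘ₗ proj K hn a) := by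
  apply Finsupp.lhom_ext
  intro i c
  have hact : act n r σ ε i = fun k => i (σ k) + n * ε k := rfl
  simp only [LinearMap.comp_apply, LinearMap.smul_apply, transOp_single, proj_single,
    permOpFin_single, hact]
  rw [redbar_shift hn, delta_shift hn]
  have h1 : redbar hn (fun k => i (σ k))
      = (⟨fun k => (redbar hn i).1 (σ k), fun k => (redbar hn i).2 (σ k)⟩ : FinIdx n r) := rfl
  have h2 : deltaF n (fun k => i (σ k)) = fun k => deltaF n i (σ k) := rfl
  rw [h1, h2, ht_add, ht_comp]
  erw [Finsupp.smul_single]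
  congr 1
  simp only [smul_eq_mul, Units.val_zpow_eq_zpow_val]
  rw [neg_add, zpow_add₀ (Units.ne_zero a)]
  ring

lemma incl_comp_permOpFin (σ : Equiv.Perm (Fin r)) :
    incl K ∘ₗ permOpFin K n r σ = transOp K n r σ 0 ∘ₗ incl K := by
  apply Finsupp.lhom_ext
  intro l c
  simp only [LinearMap.comp_apply]
  rw [permOpFin_single]
  erw [incl_single, incl_single, transOp_single]
  have : act n r σ 0 l.1 = fun k => l.1 (σ k) := by
    funext k
    simp [act]
  rw [this]

lemma proj_comp_incl (hn : 0 < n) (a : Kˣ) :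
    proj K hn a ∘ₗ incl K = (LinearMap.id : FinTensorSpace K n r →ₗ[K] _) := by
  apply Finsupp.lhom_ext
  intro l c
  simp only [LinearMap.comp_apply, incl_single, proj_single, LinearMap.id_apply]
  rw [redbar_val hn, delta_val]
  have : ht (fun _ : Fin r => (0:ℤ)) = 0 := by simp [ht]
  rw [this]
  simp

lemma single_decomp (hn : 0 < n) (i : Fin r → ℤ) (c : K) :
    Finsupp.single i c
      = c • transOp K n r 1 (deltaF n i) (incl K (Finsupp.single (redbar hn i) 1)) := by
  rw [incl_single, transOp_single]
  have : act n r 1 (deltaF n i) (redbar hn i).1 = i := by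
    funext k
    simp only [act, Equiv.Perm.one_apply]
    exact redbar_add_delta hn i k
  rw [this, Finsupp.smul_single, smul_eq_mul, mul_one]

lemma mem_affineSchur_iff {φ : Module.End K (TensorSpace K r)} :
    φ ∈ affineSchur K n r ↔
      ∀ (σ : Equiv.Perm (Fin r)) (ε : Fin r → ℤ),
        transOp K n r σ ε ∘ₗ φ = φ ∘ₗ transOp K n r σ ε := by
  rw [affineSchur, Subalgebra.mem_centralizer_iff]
  constructor
  · intro h σ ε
    have := h (transOp K n r σ ε) ⟨(σ, ε), rfl⟩
    rwa [Module.End.mul_eq_comp, Module.End.mul_eq_comp] at this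
  · rintro h g ⟨⟨σ, ε⟩, rfl⟩
    rw [Module.End.mul_eq_comp, Module.End.mul_eq_comp]
    exact h σ ε

lemma mem_schurAlgebra_iff {ψ : Module.End K (FinTensorSpace K n r)} :
    ψ ∈ schurAlgebra K n r ↔
      ∀ σ : Equiv.Perm (Fin r),
        permOpFin K n r σ ∘ₗ ψ = ψ ∘ₗ permOpFin K n r σ := by
  rw [schurAlgebra, Subalgebra.mem_centralizer_iff]
  constructor
  · intro h σ
    have := h (permOpFin K n r σ) ⟨σ, rfl⟩
    rwa [Module.End.mul_eq_comp, Module.End.mul_eq_comp] at this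
  · rintro h g ⟨σ, rfl⟩
    rw [Module.End.mul_eq_comp, Module.End.mul_eq_comp]
    exact h σ

/-- the underlying endomorphism map of Ψ -/
def PsiEnd (hn : 0 < n) (a : Kˣ) (φ : Module.End K (TensorSpace K r)) :
    Module.End K (FinTensorSpace K n r) :=
  proj K hn a ∘ₗ φ ∘ₗ incl K

lemma proj_comp_of_mem (hn : 0 < n) (a : Kˣ) {φ : Module.End K (TensorSpace K r)}
    (hφ : φ ∈ affineSchur K n r) :
    proj K hn a ∘ₗ φ = PsiEnd K hn a φ ∘ₗ proj K hn a := by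
  apply Finsupp.lhom_ext
  intro i c
  have hcomm := (mem_affineSchur_iff K).mp hφ 1 (deltaF n i)
  simp only [LinearMap.comp_apply]
  conv_lhs => rw [single_decomp K hn i c]
  rw [map_smul, map_smul, ← LinearMap.comp_apply φ, ← hcomm, LinearMap.comp_apply,
    ← LinearMap.comp_apply (proj K hn a), proj_comp_transOp]
  rw [proj_single]
  simp only [LinearMap.smul_apply, LinearMap.comp_apply, permOpFin_one, LinearMap.id_apply,
    PsiEnd]
  have hsingle : (Finsupp.single (redbar hn i) (c * ((a ^ (-(ht (deltaF n i))) : Kˣ) : K)))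
      = (c * ((a ^ (-(ht (deltaF n i))) : Kˣ) : K)) • Finsupp.single (redbar hn i) (1 : K) := by
    rw [Finsupp.smul_single, smul_eq_mul, mul_one]
  rw [hsingle, map_smul, map_smul, map_smul, smul_smul]

lemma PsiEnd_mem (hn : 0 < n) (a : Kˣ) {φ : Module.End K (TensorSpace K r)}
    (hφ : φ ∈ affineSchur K n r) :
    PsiEnd K hn a φ ∈ schurAlgebra K n r := by
  rw [mem_schurAlgebra_iff]
  intro σ
  have h0 : ht (0 : Fin r → ℤ) = 0 := by simp [ht]
  have key : proj K hn a ∘ₗ transOp K n r σ 0 = permOpFin K n r σ ∘ₗ proj K hn a := by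
    rw [proj_comp_transOp, h0]
    simp
  calc permOpFin K n r σ ∘ₗ PsiEnd K hn a φ
      = (permOpFin K n r σ ∘ₗ proj K hn a) ∘ₗ (φ ∘ₗ incl K) := by
        simp [PsiEnd, LinearMap.comp_assoc]
    _ = (proj K hn a ∘ₗ transOp K n r σ 0) ∘ₗ (φ ∘ₗ incl K) := by rw [key]
    _ = proj K hn a ∘ₗ (transOp K n r σ 0 ∘ₗ φ) ∘ₗ incl K := by
        simp [LinearMap.comp_assoc]
    _ = proj K hn a ∘ₗ (φ ∘ₗ transOp K n r σ 0) ∘ₗ incl K := by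
        rw [(mem_affineSchur_iff K).mp hφ σ 0]
    _ = (proj K hn a ∘ₗ φ) ∘ₗ (transOp K n r σ 0 ∘ₗ incl K) := by
        simp [LinearMap.comp_assoc]
    _ = (proj K hn a ∘ₗ φ) ∘ₗ (incl K ∘ₗ permOpFin K n r σ) := by
        rw [incl_comp_permOpFin]
    _ = PsiEnd K hn a φ ∘ₗ permOpFin K n r σ := by
        simp [PsiEnd, LinearMap.comp_assoc]

set_option synthInstance.maxHeartbeats 1000000
set_option maxHeartbeats 1600000

/-- the algebra homomorphism Ψ -/
def Psi (hn : 0 < n) (a : Kˣ) : affineSchur K n r →ₐ[K] schurAlgebra K n r :=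
  AlgHom.ofLinearMap
    { toFun := fun x => ⟨PsiEnd K hn a x.1, PsiEnd_mem K hn a x.2⟩
      map_add' := fun x y => Subtype.ext (by
        show PsiEnd K hn a (x.1 + y.1) = PsiEnd K hn a x.1 + PsiEnd K hn a y.1
        simp [PsiEnd, LinearMap.add_comp, LinearMap.comp_add])
      map_smul' := fun c x => Subtype.ext (by
        show PsiEnd K hn a (c • x.1) = c • PsiEnd K hn a x.1
        simp [PsiEnd, LinearMap.smul_comp, LinearMap.comp_smul]) }
    (by
      apply Subtype.ext
      show PsiEnd K hn a 1 = 1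
      show proj K hn a ∘ₗ (1 : Module.End K (TensorSpace K r)) ∘ₗ incl K = 1
      rw [Module.End.one_eq_id, LinearMap.id_comp, proj_comp_incl]
      rfl)
    (by
      intro x y
      apply Subtype.ext
      show PsiEnd K hn a (x.1 * y.1) = PsiEnd K hn a x.1 * PsiEnd K hn a y.1
      rw [Module.End.mul_eq_comp, Module.End.mul_eq_comp]
      show proj K hn a ∘ₗ (x.1 ∘ₗ y.1) ∘ₗ incl K = _
      calc proj K hn a ∘ₗ (x.1 ∘ₗ y.1) ∘ₗ incl K
          = (proj K hn a ∘ₗ x.1) ∘ₗ (y.1 ∘ₗ incl K) := by simp [LinearMap.comp_assoc]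
        _ = (PsiEnd K hn a x.1 ∘ₗ proj K hn a) ∘ₗ (y.1 ∘ₗ incl K) := by
            rw [proj_comp_of_mem K hn a x.2]
        _ = PsiEnd K hn a x.1 ∘ₗ (proj K hn a ∘ₗ y.1 ∘ₗ incl K) := by
            simp [LinearMap.comp_assoc]
        _ = PsiEnd K hn a x.1 ∘ₗ PsiEnd K hn a y.1 := rfl)

/-- lift of an element of the Schur algebra -/
def liftEnd (hn : 0 < n) (ψ : Module.End K (FinTensorSpace K n r)) :
    Module.End K (TensorSpace K r) :=
  Finsupp.lsum K fun l => LinearMap.toSpanSingleton K _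
    (transOp K n r 1 (deltaF n l) (incl K (ψ (Finsupp.single (redbar hn l) 1))))

lemma liftEnd_single (hn : 0 < n) (ψ : Module.End K (FinTensorSpace K n r))
    (l : Fin r → ℤ) (c : K) :
    liftEnd K hn ψ (Finsupp.single l c)
      = c • transOp K n r 1 (deltaF n l) (incl K (ψ (Finsupp.single (redbar hn l) 1))) := by
  rw [liftEnd, Finsupp.lsum_single, LinearMap.toSpanSingleton_apply]

lemma liftEnd_mem (hn : 0 < n) {ψ : Module.End K (FinTensorSpace K n r)}
    (hψ : ψ ∈ schurAlgebra K n r) :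
    liftEnd K hn ψ ∈ affineSchur K n r := by
  rw [mem_affineSchur_iff]
  intro σ ε
  apply Finsupp.lhom_ext
  intro l c
  simp only [LinearMap.comp_apply, transOp_single, liftEnd_single, map_smul]
  congr 1
  -- LHS : transOp σ ε (transOp 1 (deltaF n l) (incl (ψ (single (redbar l) 1))))
  -- RHS : transOp 1 (deltaF n (act σ ε l)) (incl (ψ (single (redbar (act σ ε l)) 1)))
  have hact : act n r σ ε l = fun k => l (σ k) + n * ε k := rfl
  have h1 : redbar hn (act n r σ ε l)
      = (⟨fun k => (redbar hn l).1 (σ k), fun k => (redbar hn l).2 (σ k)⟩ : FinIdx n r) := by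
    rw [hact, redbar_shift hn]
    rfl
  have h2 : deltaF n (act n r σ ε l) = fun k => deltaF n l (σ k) + ε k := by
    rw [hact, delta_shift hn]
    rfl
  rw [h1, h2]
  have h3 : (Finsupp.single
        (⟨fun k => (redbar hn l).1 (σ k), fun k => (redbar hn l).2 (σ k)⟩ : FinIdx n r)
        (1 : K)) = permOpFin K n r σ (Finsupp.single (redbar hn l) 1) := by
    rw [permOpFin_single]
  erw [h3]
  have e1 : ψ (permOpFin K n r σ (Finsupp.single (redbar hn l) 1))
      = permOpFin K n r σ (ψ (Finsupp.single (redbar hn l) 1)) :=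
    (LinearMap.congr_fun ((mem_schurAlgebra_iff K).mp hψ σ)
      (Finsupp.single (redbar hn l) 1)).symm
  rw [e1]
  have e2 : incl K (permOpFin K n r σ (ψ (Finsupp.single (redbar hn l) 1)))
      = transOp K n r σ 0 (incl K (ψ (Finsupp.single (redbar hn l) 1))) :=
    LinearMap.congr_fun (incl_comp_permOpFin K σ) _
  rw [e2]
  set y := incl K (ψ (Finsupp.single (redbar hn l) 1)) with hy
  have e3 : transOp K n r σ ε (transOp K n r 1 (deltaF n l) y)
      = transOp K n r (1 * σ) (fun k => deltaF n l (σ k) + ε k) y :=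
    LinearMap.congr_fun (transOp_comp K σ 1 ε (deltaF n l)) y
  have e4 : transOp K n r 1 (fun k => deltaF n l (σ k) + ε k) (transOp K n r σ 0 y)
      = transOp K n r (σ * 1) (fun k => (0 : Fin r → ℤ) ((1 : Equiv.Perm (Fin r)) k)
          + (fun k => deltaF n l (σ k) + ε k) k) y :=
    LinearMap.congr_fun (transOp_comp K 1 σ (fun k => deltaF n l (σ k) + ε k) 0) y
  rw [e3, e4]
  simp

lemma PsiEnd_liftEnd (hn : 0 < n) (a : Kˣ) {ψ : Module.End K (FinTensorSpace K n r)} :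
    PsiEnd K hn a (liftEnd K hn ψ) = ψ := by
  apply Finsupp.lhom_ext
  intro l c
  show proj K hn a (liftEnd K hn ψ (incl K (Finsupp.single l c))) = _
  rw [incl_single, liftEnd_single, redbar_val hn, delta_val, map_smul]
  have : transOp K n r 1 (fun _ : Fin r => (0:ℤ)) = LinearMap.id := by
    have : (fun _ : Fin r => (0:ℤ)) = (0 : Fin r → ℤ) := rfl
    rw [this, transOp_one_zero]
  rw [this, LinearMap.id_apply, ← LinearMap.comp_apply (proj K hn a), proj_comp_incl,
    LinearMap.id_apply, ← map_smul, Finsupp.smul_single, smul_eq_mul, mul_one]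

end Construction


section Computation

variable {K : Type*} [Field K] {n r : ℕ}

instance instDecEqFinIdx : DecidableEq (FinIdx n r) := fun a b =>
  decidable_of_iff (a.1 = b.1) Subtype.ext_iff.symm

lemma dvd_iff_eq {x y : ℤ} (hx1 : 1 ≤ x) (hx2 : x ≤ (n:ℤ)) (hy1 : 1 ≤ y) (hy2 : y ≤ (n:ℤ)) :
    (n : ℤ) ∣ (x - y) ↔ x = y := by
  constructor
  · intro h
    have : x - y = 0 := Int.eq_zero_of_abs_lt_dvd h (abs_lt.mpr ⟨by omega, by omega⟩)
    omega
  · intro h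
    rw [h, sub_self]
    exact dvd_zero _

/-- characterization of the affine support set for shifted indices -/
lemma xiSupport_eq (hn : 0 < n) (i j l : FinIdx n r) (ε : Fin r → ℤ) :
    xiSupport n r i.1 (fun k => j.1 k + n * ε k) l.1
      = (Finset.univ.filter fun σ : Equiv.Perm (Fin r) => (fun k => j.1 (σ k)) = l.1).image
          (fun σ => fun k => i.1 (σ k) - n * ε (σ k)) := by
  classical
  unfold xiSupport
  have hfil : (Finset.univ.filter fun σ : Equiv.Perm (Fin r) =>
        ∀ k, (n : ℤ) ∣ (l.1 k - (fun k => j.1 k + n * ε k) (σ k)))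
      = (Finset.univ.filter fun σ : Equiv.Perm (Fin r) => (fun k => j.1 (σ k)) = l.1) := by
    apply Finset.filter_congr
    intro σ _
    constructor
    · intro h
      funext k
      have hk := h k
      simp only at hk
      have h2 : (n:ℤ) ∣ (l.1 k - j.1 (σ k)) := by
        obtain ⟨d, hd⟩ := hk
        exact ⟨d + ε (σ k), by linarith⟩
      exact ((dvd_iff_eq (l.2 k).1 (l.2 k).2 (j.2 (σ k)).1 (j.2 (σ k)).2).mp h2).symm
    · intro h k
      have hk : j.1 (σ k) = l.1 k := congrFun h k
      simp only [hk]
      have : l.1 k - (l.1 k + n * ε (σ k)) = (-(ε (σ k))) * n := by ring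
      rw [this]
      exact Dvd.intro_left _ rfl
  rw [hfil]
  apply Finset.image_congr
  intro σ hσ
  simp only [Finset.coe_filter, Set.mem_setOf_eq, Finset.mem_univ, true_and] at hσ
  funext k
  have hk : j.1 (σ k) = l.1 k := congrFun hσ k
  simp only [hk]
  ring

lemma redbar_elt (hn : 0 < n) (i : FinIdx n r) (ε : Fin r → ℤ) (σ : Equiv.Perm (Fin r)) :
    redbar hn (fun k => i.1 (σ k) - n * ε (σ k))
      = (⟨fun k => i.1 (σ k), fun k => i.2 (σ k)⟩ : FinIdx n r) := by
  apply Subtype.ext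
  funext k
  show (i.1 (σ k) - n * ε (σ k) - 1) % n + 1 = i.1 (σ k)
  rw [show i.1 (σ k) - n * ε (σ k) - 1 = i.1 (σ k) - 1 + (-(ε (σ k))) * (n:ℤ) by ring,
    Int.add_mul_emod_self_right]
  have h := i.2 (σ k)
  rw [Int.emod_eq_of_lt (by omega) (by omega)]
  ring

lemma ht_delta_elt (hn : 0 < n) (i : FinIdx n r) (ε : Fin r → ℤ) (σ : Equiv.Perm (Fin r)) :
    ht (deltaF n (fun k => i.1 (σ k) - n * ε (σ k))) = -∑ k, ε k := by
  have hd : deltaF n (fun k => i.1 (σ k) - n * ε (σ k)) = fun k => -(ε (σ k)) := by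
    funext k
    show (i.1 (σ k) - n * ε (σ k) - 1) / n = -(ε (σ k))
    rw [show i.1 (σ k) - n * ε (σ k) - 1 = i.1 (σ k) - 1 + (-(ε (σ k))) * (n:ℤ) by ring,
      Int.add_mul_ediv_right _ _ (by exact_mod_cast hn.ne' : (n:ℤ) ≠ 0)]
    have h := i.2 (σ k)
    rw [Int.ediv_eq_zero_of_lt (by omega) (by omega)]
    ring
  rw [hd]
  show ∑ k, -(ε (σ k)) = -∑ k, ε k
  rw [← Finset.sum_neg_distrib]
  exact Equiv.sum_comp σ (fun k => -(ε k))

lemma perm_apply_inv_self {α : Type*} (f : Equiv.Perm α) (x : α) : f (f⁻¹ x) = x :=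
  f.apply_symm_apply x

lemma perm_inv_apply_self {α : Type*} (f : Equiv.Perm α) (x : α) : f⁻¹ (f x) = x :=
  f.symm_apply_apply x

lemma mem_permStab {i : Fin r → ℤ} {σ : Equiv.Perm (Fin r)} :
    σ ∈ permStab r i ↔ ∀ k, i (σ k) = i k := Iff.rfl

/-- the cardinality of each fiber of the reduction map is the relative index -/
lemma fiber_card (hn : 0 < n) (i j l : FinIdx n r) (ε : Fin r → ℤ) (t : FinIdx n r)
    (htm : t ∈ xiFinSupport n r i j l) :
    ((xiSupport n r i.1 (fun k => j.1 k + n * ε k) l.1).filter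
        (fun k => redbar hn k = t)).card
      = Subgroup.relIndex (permStab r ε) (permStab r i.1 ⊓ permStab r j.1) := by
  classical
  unfold xiFinSupport at htm
  obtain ⟨σ₀, hσ₀, hσ₀t⟩ :=
    (@Finset.mem_image _ _ (fun _ _ => Classical.propDecidable _) _ _ _).mp htm
  replace hσ₀ := (Finset.mem_filter.mp hσ₀).2
  set H := permStab r i.1 ⊓ permStab r j.1 with hH
  set Sε := (permStab r ε).subgroupOf H with hSε
  set fib := (xiSupport n r i.1 (fun k => j.1 k + n * ε k) l.1).filter
      (fun k => redbar hn k = t) with hfib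
  have hstabi : ∀ τ : Equiv.Perm (Fin r), τ ∈ H → ∀ x, i.1 (τ x) = i.1 x := fun τ hτ =>
    mem_permStab.mp (Subgroup.mem_inf.mp hτ).1
  have hstabj : ∀ τ : Equiv.Perm (Fin r), τ ∈ H → ∀ x, j.1 (τ x) = j.1 x := fun τ hτ =>
    mem_permStab.mp (Subgroup.mem_inf.mp hτ).2
  -- the map from H to the fiber
  set f : H → (Fin r → ℤ) :=
    fun τ => fun m => i.1 (σ₀ m) - n * ε (((τ : Equiv.Perm (Fin r)))⁻¹ (σ₀ m)) with hf
  have hmem : ∀ τ : H, f τ ∈ fib := by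
    intro τ
    have hτinv : (τ : Equiv.Perm (Fin r))⁻¹ ∈ H := Subgroup.inv_mem H τ.2
    have hfeq : (fun m => i.1 (((τ : Equiv.Perm (Fin r))⁻¹ * σ₀) m)
        - n * ε (((τ : Equiv.Perm (Fin r))⁻¹ * σ₀) m)) = f τ := by
      funext m
      simp only [Equiv.Perm.mul_apply, hf]
      rw [hstabi _ hτinv (σ₀ m)]
    rw [hfib, Finset.mem_filter]
    constructor
    · rw [xiSupport_eq hn i j l ε]
      apply Finset.mem_image.mpr
      refine ⟨(τ : Equiv.Perm (Fin r))⁻¹ * σ₀, ?_, hfeq⟩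
      apply Finset.mem_filter.mpr
      refine ⟨Finset.mem_univ _, ?_⟩
      funext m
      show j.1 ((τ : Equiv.Perm (Fin r))⁻¹ (σ₀ m)) = l.1 m
      rw [hstabj _ hτinv (σ₀ m)]
      exact congrFun hσ₀ m
    · rw [← hfeq, redbar_elt hn i ε _]
      rw [← hσ₀t]
      apply Subtype.ext
      funext m
      show i.1 ((τ : Equiv.Perm (Fin r))⁻¹ (σ₀ m)) = i.1 (σ₀ m)
      exact hstabi _ hτinv (σ₀ m)
  set F : H → {x // x ∈ fib} := fun τ => ⟨f τ, hmem τ⟩ with hF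
  have hresp : ∀ τ τ' : H, (QuotientGroup.leftRel Sε) τ τ' → F τ = F τ' := by
    intro τ τ' hrel
    rw [QuotientGroup.leftRel_apply] at hrel
    have h1 : ((τ⁻¹ * τ' : H) : Equiv.Perm (Fin r)) ∈ permStab r ε :=
      Subgroup.mem_subgroupOf.mp hrel
    have h2 : ∀ k, ε ((τ : Equiv.Perm (Fin r))⁻¹ ((τ' : Equiv.Perm (Fin r)) k)) = ε k := by
      intro k
      have := mem_permStab.mp h1 k
      simpa using this
    apply Subtype.ext
    funext m
    show i.1 (σ₀ m) - n * ε ((τ : Equiv.Perm (Fin r))⁻¹ (σ₀ m))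
        = i.1 (σ₀ m) - n * ε ((τ' : Equiv.Perm (Fin r))⁻¹ (σ₀ m))
    have h3 := h2 ((τ' : Equiv.Perm (Fin r))⁻¹ (σ₀ m))
    rw [perm_apply_inv_self] at h3
    rw [h3]
  set g : (H ⧸ Sε) → {x // x ∈ fib} :=
    fun q => Quotient.liftOn' q F hresp with hg
  have hginj : Function.Injective g := by
    intro q q'
    refine Quotient.inductionOn₂' q q' (fun τ τ' h => ?_)
    have hfeq : f τ = f τ' := congrArg Subtype.val h
    have hε : ∀ x, ε ((τ : Equiv.Perm (Fin r))⁻¹ x) = ε ((τ' : Equiv.Perm (Fin r))⁻¹ x) := by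
      intro x
      obtain ⟨m, hm⟩ := σ₀.surjective x
      have hcf := congrFun hfeq m
      simp only [hf] at hcf
      have hne : (n : ℤ) ≠ 0 := by exact_mod_cast hn.ne'
      have hmul : (n:ℤ) * ε ((τ : Equiv.Perm (Fin r))⁻¹ (σ₀ m))
          = (n:ℤ) * ε ((τ' : Equiv.Perm (Fin r))⁻¹ (σ₀ m)) := by linarith
      have := mul_left_cancel₀ hne hmul
      rw [← hm]
      exact this
    apply Quotient.sound'
    show (QuotientGroup.leftRel Sε) τ τ'
    rw [QuotientGroup.leftRel_apply]
    apply Subgroup.mem_subgroupOf.mpr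
    show ((τ⁻¹ * τ' : H) : Equiv.Perm (Fin r)) ∈ permStab r ε
    rw [mem_permStab]
    intro k
    have h4 : ((τ⁻¹ * τ' : H) : Equiv.Perm (Fin r)) k
        = (τ : Equiv.Perm (Fin r))⁻¹ ((τ' : Equiv.Perm (Fin r)) k) := by
      simp [Equiv.Perm.mul_apply]
    rw [h4, hε ((τ' : Equiv.Perm (Fin r)) k), perm_inv_apply_self]
  have hgsurj : Function.Surjective g := by
    rintro ⟨k, hk⟩
    rw [hfib, Finset.mem_filter] at hk
    obtain ⟨hkS, hkt⟩ := hk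
    rw [xiSupport_eq hn i j l ε] at hkS
    obtain ⟨σ, hσf, hσv⟩ := Finset.mem_image.mp hkS
    have hσ : (fun m => j.1 (σ m)) = l.1 := (Finset.mem_filter.mp hσf).2
    have hredk : redbar hn k
        = (⟨fun m => i.1 (σ m), fun m => i.2 (σ m)⟩ : FinIdx n r) := by
      rw [← hσv]
      exact redbar_elt hn i ε σ
    have hit : ∀ m, i.1 (σ m) = i.1 (σ₀ m) := by
      have h1 : (⟨fun m => i.1 (σ m), fun m => i.2 (σ m)⟩ : FinIdx n r)
          = (⟨fun m => i.1 (σ₀ m), fun m => i.2 (σ₀ m)⟩ : FinIdx n r) := by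
        rw [← hredk, hkt, ← hσ₀t]
      intro m
      exact congrFun (congrArg Subtype.val h1) m
    have hτH : σ₀ * σ⁻¹ ∈ H := by
      rw [hH, Subgroup.mem_inf]
      constructor
      · rw [mem_permStab]
        intro m
        rw [Equiv.Perm.mul_apply, ← hit (σ⁻¹ m), perm_apply_inv_self]
      · rw [mem_permStab]
        intro m
        rw [Equiv.Perm.mul_apply]
        have h5 : j.1 (σ₀ (σ⁻¹ m)) = l.1 (σ⁻¹ m) := congrFun hσ₀ (σ⁻¹ m)
        have h6 : j.1 (σ (σ⁻¹ m)) = l.1 (σ⁻¹ m) := congrFun hσ (σ⁻¹ m)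
        rw [h5, ← h6, perm_apply_inv_self]
    refine ⟨Quotient.mk'' ⟨σ₀ * σ⁻¹, hτH⟩, ?_⟩
    apply Subtype.ext
    show f ⟨σ₀ * σ⁻¹, hτH⟩ = k
    funext m
    show i.1 (σ₀ m) - n * ε ((σ₀ * σ⁻¹)⁻¹ (σ₀ m)) = k m
    have h7 : ((σ₀ * σ⁻¹)⁻¹ : Equiv.Perm (Fin r)) (σ₀ m) = σ m := by
      rw [mul_inv_rev, inv_inv, Equiv.Perm.mul_apply, perm_inv_apply_self]
    rw [h7, ← hit m]
    exact congrFun hσv m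
  have hcard : fib.card = Nat.card (H ⧸ Sε) := by
    rw [← Nat.card_eq_finsetCard]
    exact (Nat.card_congr (Equiv.ofBijective g ⟨hginj, hgsurj⟩)).symm
  rw [hcard]
  rfl


lemma PsiEnd_xi (hn : 0 < n) (a : Kˣ) (i j : FinIdx n r) (ε : Fin r → ℤ) :
    PsiEnd K hn a (xi K n r i.1 (fun k => j.1 k + n * ε k))
      = (((a ^ (∑ k, ε k) : Kˣ) : K) *
          ((Subgroup.relIndex (permStab r ε) (permStab r i.1 ⊓ permStab r j.1) : ℕ) : K)) •
        xiFin K n r i j := by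
  set A : K := ((a ^ (∑ k, ε k) : Kˣ) : K) with hA
  set c₀ : ℕ := Subgroup.relIndex (permStab r ε) (permStab r i.1 ⊓ permStab r j.1) with hc₀
  apply Finsupp.lhom_ext
  intro l c
  show proj K hn a (xi K n r i.1 (fun k => j.1 k + n * ε k) (incl K (Finsupp.single l c)))
      = _
  rw [incl_single, xi, Finsupp.lsum_single, LinearMap.toSpanSingleton_apply, map_smul,
    map_sum]
  have hterm : ∀ k ∈ xiSupport n r i.1 (fun k => j.1 k + n * ε k) l.1,
      proj K hn a (Finsupp.single k (1:K)) = Finsupp.single (redbar hn k) A := by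
    intro k hk
    rw [xiSupport_eq hn i j l ε] at hk
    obtain ⟨σ, hσf, hσv⟩ := Finset.mem_image.mp hk
    rw [proj_single, one_mul]
    congr 1
    rw [← hσv, ht_delta_elt hn i ε σ, neg_neg]
  rw [Finset.sum_congr rfl hterm]
  have hmapsto : ∀ k ∈ xiSupport n r i.1 (fun k => j.1 k + n * ε k) l.1,
      redbar hn k ∈ xiFinSupport n r i j l := by
    intro k hk
    rw [xiSupport_eq hn i j l ε] at hk
    obtain ⟨σ, hσf, hσv⟩ := Finset.mem_image.mp hk
    rw [← hσv, redbar_elt hn i ε σ]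
    unfold xiFinSupport
    exact (@Finset.mem_image _ _ (fun _ _ => Classical.propDecidable _) _ _ _).mpr
      ⟨σ, Finset.mem_filter.mpr ⟨Finset.mem_univ _, (Finset.mem_filter.mp hσf).2⟩, rfl⟩
  rw [← Finset.sum_fiberwise_of_maps_to hmapsto (fun k => Finsupp.single (redbar hn k) A)]
  have hinner : ∀ t ∈ xiFinSupport n r i j l,
      (∑ k ∈ (xiSupport n r i.1 (fun k => j.1 k + n * ε k) l.1).filter
          (fun k => redbar hn k = t), Finsupp.single (redbar hn k) A)
        = Finsupp.single t ((c₀ : K) * A) := by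
    intro t htm
    have h1 : ∀ k ∈ (xiSupport n r i.1 (fun k => j.1 k + n * ε k) l.1).filter
        (fun k => redbar hn k = t),
        Finsupp.single (redbar hn k) A = Finsupp.single t A := by
      intro k hk
      rw [(Finset.mem_filter.mp hk).2]
    rw [Finset.sum_congr rfl h1, Finset.sum_const, fiber_card hn i j l ε t htm, ← hc₀,
      Finsupp.smul_single]
    congr 1
    rw [nsmul_eq_mul]
  rw [Finset.sum_congr rfl hinner]
  rw [LinearMap.smul_apply]
  show _ = (A * (c₀ : K)) • xiFin K n r i j (Finsupp.single l c)
  rw [xiFin, Finsupp.lsum_single, LinearMap.toSpanSingleton_apply, Finset.smul_sum,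
    Finset.smul_sum, Finset.smul_sum]
  apply Finset.sum_congr rfl
  intro t _
  simp only [Finsupp.smul_single, smul_eq_mul]
  congr 1
  ring


end Computation

/-- there is a surjective unital K-algebra homomorphism
Ψ_a : End_{KΣ̂_r}(Ẽ^{⊗r}) → End_{KΣ_r}(E^{⊗r}) with
Ψ_a(ξ_{i, j+nε}) = a^{ht(ε)} · [Σ_{i,j} : Σ_{i,j,ε}] · ξ^fin_{i,j}
for all i,j ∈ I(n,r) and ε ∈ ℤ^r, where ht(ε) = Σ_k ε_k and the index
[Σ_{i,j} : Σ_{i,j,ε}] is cast into K. -/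
theorem exists_psi_onto_schurAlgebra (K : Type*) [Field K] [Infinite K]
    (n r : ℕ) (hn : 1 ≤ n) (hr : 1 ≤ r) (a : Kˣ) :
    ∃ Ψ : affineSchur K n r →ₐ[K] schurAlgebra K n r,
      Function.Surjective Ψ ∧
      ∀ (i j : FinIdx n r) (ε : Fin r → ℤ) (x : affineSchur K n r),
        (x : Module.End K (TensorSpace K r))
            = xi K n r i.1 (fun k => j.1 k + n * ε k) →
        (Ψ x : Module.End K (FinTensorSpace K n r))
            = (((a ^ (∑ k, ε k) : Kˣ) : K) *
                ((Subgroup.relIndex (permStab r ε)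
                  (permStab r i.1 ⊓ permStab r j.1) : ℕ) : K)) •
              xiFin K n r i j := by
  have hn' : 0 < n := hn
  refine ⟨Psi K hn' a, ?_, ?_⟩
  · intro y
    refine ⟨⟨liftEnd K hn' y.1, liftEnd_mem K hn' y.2⟩, ?_⟩
    apply Subtype.ext
    show PsiEnd K hn' a (liftEnd K hn' y.1) = y.1
    exact PsiEnd_liftEnd K hn' a
  · intro i j ε x hx
    show PsiEnd K hn' a x.1 = _
    have hx' : x.1 = xi K n r i.1 (fun k => j.1 k + n * ε k) := hx
    rw [hx']
    exact PsiEnd_xi hn' a i j ε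

end AffineSchur
end
end
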